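/- Let S be a symmetric d×d real matrix with smallest eigenvalue λ_min and largest eigenvalue λ_max, and c ≥ 1. Then the minimum of w₁ δ₁ᵀS δ₁ + w₂ δ₂ᵀS δ₂ over w₁+w₂ = 1, |w₁|+|w₂| ≤ c, w₁δ₁ + w₂δ₂ = 0, ‖δ₁‖,‖δ₂‖ ≤ 1 equals min(λ_min, −((c−1)/(c+1))·λ_max, 0). -/

import Mathlib

open Matrix BigOperators

private lemma dp_nonneg {d : ℕ} (v : Fin d → ℝ) : 0 ≤ v ⬝ᵥ v :=
  Finset.sum_nonneg fun i _ => mul_self_nonneg _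

private lemma rayleigh (d : ℕ) (S : Matrix (Fin d) (Fin d) ℝ) (hA : S.IsHermitian)
    (lmin lmax : ℝ)
    (hev : ∀ i, lmin ≤ hA.eigenvalues i ∧ hA.eigenvalues i ≤ lmax)
    (δ : Fin d → ℝ) :
    lmin * (δ ⬝ᵥ δ) ≤ δ ⬝ᵥ S.mulVec δ ∧ δ ⬝ᵥ S.mulVec δ ≤ lmax * (δ ⬝ᵥ δ) := by
  set U : Matrix (Fin d) (Fin d) ℝ := (hA.eigenvectorUnitary : Matrix (Fin d) (Fin d) ℝ) with hU
  have hU1 : U * star U = 1 := (Matrix.mem_unitaryGroup_iff).mp hA.eigenvectorUnitary.2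
  set y : Fin d → ℝ := star U *ᵥ δ with hy
  have hstar : star U = Uᵀ := by
    ext i j; simp [Matrix.star_apply]
  have hvm : vecMul δ U = y := by
    rw [hy, hstar, Matrix.mulVec_transpose]
  have hq : δ ⬝ᵥ S.mulVec δ = ∑ i, hA.eigenvalues i * (y i * y i) := by
    conv_lhs => rw [hA.spectral_theorem, Unitary.conjStarAlgAut_apply, Matrix.mul_assoc]
    rw [← Matrix.mulVec_mulVec, Matrix.dotProduct_mulVec, hvm, ← Matrix.mulVec_mulVec]
    simp [Matrix.mulVec_diagonal, dotProduct, mul_comm, mul_left_comm]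
    rfl
  have hn : δ ⬝ᵥ δ = ∑ i, y i * y i := by
    have : δ ⬝ᵥ δ = δ ⬝ᵥ ((U * star U) *ᵥ δ) := by rw [hU1, Matrix.one_mulVec]
    rw [this, ← Matrix.mulVec_mulVec, Matrix.dotProduct_mulVec, hvm]
    rfl
  constructor
  · rw [hq, hn, Finset.mul_sum]
    exact Finset.sum_le_sum fun i _ => mul_le_mul_of_nonneg_right (hev i).1 (mul_self_nonneg _)
  · rw [hq, hn, Finset.mul_sum]
    exact Finset.sum_le_sum fun i _ => mul_le_mul_of_nonneg_right (hev i).2 (mul_self_nonneg _)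

/-- Scalar case when `w₂ < 0`. -/
private lemma neg_case (c lmax w₁ w₂ q₁ q₂ a b t : ℝ) (hc : 1 ≤ c)
    (hw : w₁ + w₂ = 1) (hw2 : w₂ < 0) (hwc : w₁ - w₂ ≤ c)
    (ha : 0 ≤ a) (hb1 : b ≤ 1)
    (hab : w₂ ^ 2 * b = w₁ ^ 2 * a) (hq : w₂ ^ 2 * q₂ = w₁ ^ 2 * q₁)
    (hq1u : q₁ ≤ lmax * a)
    (ht : t = w₁ * q₁ + w₂ * q₂) :
    -((c - 1) / (c + 1)) * lmax ≤ t ∨ 0 ≤ t := by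
  have hw1 : 1 < w₁ := by linarith
  have hw1p : 0 < w₁ := by linarith
  have hw2sq : 0 < w₂ ^ 2 := by nlinarith [mul_pos_of_neg_of_neg hw2 hw2]
  have e1 : w₂ ^ 2 * t = w₂ * w₁ * q₁ := by
    linear_combination w₂ ^ 2 * ht + w₂ * hq + w₂ * w₁ * q₁ * hw
  have hprod : w₂ * w₁ < 0 := mul_neg_of_neg_of_pos hw2 hw1p
  rcases le_or_gt lmax 0 with hl | hl
  · -- lmax ≤ 0 : t ≥ 0
    right
    have hq1 : q₁ ≤ 0 := le_trans hq1u (mul_nonpos_of_nonpos_of_nonneg hl ha)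
    have : 0 ≤ w₂ ^ 2 * t := by nlinarith [e1, hprod, hq1]
    nlinarith [this, hw2sq]
  · -- lmax > 0
    left
    have f2 : w₁ ^ 2 * a ≤ w₂ ^ 2 := by nlinarith [hab, hb1, hw2sq]
    -- w₂² t = w₂ w₁ q₁ ≥ w₂ w₁ (lmax a)
    have s2 : w₂ * w₁ * (lmax * a) ≤ w₂ ^ 2 * t := by
      rw [e1]; exact mul_le_mul_of_nonpos_left hq1u hprod.le
    -- multiply by w₁ : w₁ w₂² t ≥ (w₂ lmax) (w₁² a) ≥ (w₂ lmax) w₂²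
    have s3 : w₂ * lmax * (w₁ ^ 2 * a) ≤ w₁ * (w₂ ^ 2 * t) := by nlinarith [s2, hw1p]
    have s4 : w₂ * lmax * w₂ ^ 2 ≤ w₂ * lmax * (w₁ ^ 2 * a) :=
      mul_le_mul_of_nonpos_left f2 (mul_nonpos_of_nonpos_of_nonneg hw2.le hl.le)
    have s5 : w₂ ^ 2 * (w₂ * lmax) ≤ w₂ ^ 2 * (w₁ * t) := by nlinarith [s3, s4]
    have g1 : w₂ * lmax ≤ w₁ * t := le_of_mul_le_mul_left s5 hw2sq
    have g3 : 0 ≤ lmax * (c + 1 - 2 * w₁) := by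
      apply mul_nonneg hl.le; linarith
    have k1 : (c + 1) * (w₂ * lmax) ≤ (c + 1) * (w₁ * t) :=
      mul_le_mul_of_nonneg_left g1 (by linarith)
    have k2 : lmax * w₂ = lmax * (1 - w₁) := by rw [show w₂ = 1 - w₁ by linarith]
    have goal' : w₁ * 0 ≤ w₁ * ((c + 1) * t + (c - 1) * lmax) := by nlinarith [k1, k2, g3]
    have goal2 : 0 ≤ (c + 1) * t + (c - 1) * lmax := by
      simpa using le_of_mul_le_mul_left goal' hw1p
    have hc1 : (0 : ℝ) < c + 1 := by linarith
    rw [neg_mul, neg_le, div_mul_eq_mul_div, le_div_iff₀ hc1]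
    linarith

theorem stmt_3 (d : ℕ) (c : ℝ) (hc : 1 ≤ c)
    (S : Matrix (Fin d) (Fin d) ℝ) (hS : S.IsSymm) (lmin lmax : ℝ)
    (hmin : IsLeast {μ : ℝ | ∃ v : Fin d → ℝ, v ≠ 0 ∧ S.mulVec v = μ • v} lmin)
    (hmax : IsGreatest {μ : ℝ | ∃ v : Fin d → ℝ, v ≠ 0 ∧ S.mulVec v = μ • v} lmax) :
    IsLeast {t : ℝ | ∃ (w₁ w₂ : ℝ) (δ₁ δ₂ : Fin d → ℝ),
      w₁ + w₂ = 1 ∧ |w₁| + |w₂| ≤ c ∧ w₁ • δ₁ + w₂ • δ₂ = 0 ∧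
      δ₁ ⬝ᵥ δ₁ ≤ 1 ∧ δ₂ ⬝ᵥ δ₂ ≤ 1 ∧
      t = w₁ * (δ₁ ⬝ᵥ S.mulVec δ₁) + w₂ * (δ₂ ⬝ᵥ S.mulVec δ₂)}
      (min (min lmin (-((c - 1) / (c + 1)) * lmax)) 0) := by
  have hA : S.IsHermitian := hS
  have hev : ∀ i, lmin ≤ hA.eigenvalues i ∧ hA.eigenvalues i ≤ lmax := fun i =>
    ⟨hmin.2 ⟨_, fun h => hA.eigenvectorBasis.orthonormal.ne_zero i (by simpa using h), hA.mulVec_eigenvectorBasis i⟩,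
     hmax.2 ⟨_, fun h => hA.eigenvectorBasis.orthonormal.ne_zero i (by simpa using h), hA.mulVec_eigenvectorBasis i⟩⟩
  have hray := rayleigh d S hA lmin lmax hev
  have hc1 : (0 : ℝ) < c + 1 := by linarith
  set κ : ℝ := -((c - 1) / (c + 1)) * lmax with hκ
  constructor
  · -- membership
    have h0 : (0 : ℝ) ∈ {t : ℝ | ∃ (w₁ w₂ : ℝ) (δ₁ δ₂ : Fin d → ℝ),
        w₁ + w₂ = 1 ∧ |w₁| + |w₂| ≤ c ∧ w₁ • δ₁ + w₂ • δ₂ = 0 ∧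
        δ₁ ⬝ᵥ δ₁ ≤ 1 ∧ δ₂ ⬝ᵥ δ₂ ≤ 1 ∧
        t = w₁ * (δ₁ ⬝ᵥ S.mulVec δ₁) + w₂ * (δ₂ ⬝ᵥ S.mulVec δ₂)} := by
      refine ⟨1, 0, 0, 0, by norm_num, by simpa using hc, by simp, by simp, by simp, by simp⟩
    have hlm : lmin ∈ {t : ℝ | ∃ (w₁ w₂ : ℝ) (δ₁ δ₂ : Fin d → ℝ),
        w₁ + w₂ = 1 ∧ |w₁| + |w₂| ≤ c ∧ w₁ • δ₁ + w₂ • δ₂ = 0 ∧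
        δ₁ ⬝ᵥ δ₁ ≤ 1 ∧ δ₂ ⬝ᵥ δ₂ ≤ 1 ∧
        t = w₁ * (δ₁ ⬝ᵥ S.mulVec δ₁) + w₂ * (δ₂ ⬝ᵥ S.mulVec δ₂)} := by
      obtain ⟨v, hv0, hv⟩ := hmin.1
      have hs : 0 < v ⬝ᵥ v := (dp_nonneg v).lt_of_ne fun h =>
        hv0 (dotProduct_self_eq_zero.mp h.symm)
      set r : ℝ := (Real.sqrt (v ⬝ᵥ v))⁻¹ with hr
      set v' : Fin d → ℝ := r • v with hv'
      have hss : Real.sqrt (v ⬝ᵥ v) * Real.sqrt (v ⬝ᵥ v) = v ⬝ᵥ v :=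
        Real.mul_self_sqrt hs.le
      have hn1 : v' ⬝ᵥ v' = 1 := by
        rw [hv', smul_dotProduct, dotProduct_smul, smul_eq_mul, smul_eq_mul, hr]
        field_simp
        rw [Real.sq_sqrt hs.le]
      have hmv : S.mulVec v' = lmin • v' := by
        rw [hv', Matrix.mulVec_smul, hv, smul_comm]
      have hqv : v' ⬝ᵥ S.mulVec v' = lmin := by
        rw [hmv, dotProduct_smul, smul_eq_mul, hn1, mul_one]
      refine ⟨1/2, 1/2, v', -v', by norm_num, by rw [abs_of_pos] <;> norm_num <;> linarith,
        by simp, by rw [hn1], ?_, ?_⟩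
      · simpa [neg_dotProduct, dotProduct_neg] using le_of_eq hn1
      · rw [hqv]
        simp [neg_dotProduct, dotProduct_neg, Matrix.mulVec_neg, hqv]
        ring
    have hκm : κ ∈ {t : ℝ | ∃ (w₁ w₂ : ℝ) (δ₁ δ₂ : Fin d → ℝ),
        w₁ + w₂ = 1 ∧ |w₁| + |w₂| ≤ c ∧ w₁ • δ₁ + w₂ • δ₂ = 0 ∧
        δ₁ ⬝ᵥ δ₁ ≤ 1 ∧ δ₂ ⬝ᵥ δ₂ ≤ 1 ∧
        t = w₁ * (δ₁ ⬝ᵥ S.mulVec δ₁) + w₂ * (δ₂ ⬝ᵥ S.mulVec δ₂)} := by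
      obtain ⟨u, hu0, hu⟩ := hmax.1
      have hs : 0 < u ⬝ᵥ u := (dp_nonneg u).lt_of_ne fun h =>
        hu0 (dotProduct_self_eq_zero.mp h.symm)
      set r : ℝ := (Real.sqrt (u ⬝ᵥ u))⁻¹ with hr
      set u' : Fin d → ℝ := r • u with hu'
      have hss : Real.sqrt (u ⬝ᵥ u) * Real.sqrt (u ⬝ᵥ u) = u ⬝ᵥ u :=
        Real.mul_self_sqrt hs.le
      have hn1 : u' ⬝ᵥ u' = 1 := by
        rw [hu', smul_dotProduct, dotProduct_smul, smul_eq_mul, smul_eq_mul, hr]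
        field_simp
        rw [Real.sq_sqrt hs.le]
      have hmv : S.mulVec u' = lmax • u' := by
        rw [hu', Matrix.mulVec_smul, hu, smul_comm]
      have hqu : u' ⬝ᵥ S.mulVec u' = lmax := by
        rw [hmv, dotProduct_smul, smul_eq_mul, hn1, mul_one]
      set α : ℝ := (c - 1) / (c + 1) with hα
      have hα0 : 0 ≤ α := div_nonneg (by linarith) hc1.le
      have hα1 : α ≤ 1 := by
        rw [hα, div_le_one hc1]; linarith
      refine ⟨(c + 1) / 2, (1 - c) / 2, α • u', u', by ring, ?_, ?_, ?_, by rw [hn1], ?_⟩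
      · rw [abs_of_pos (by linarith), abs_of_nonpos (by linarith)]
        linarith
      · rw [smul_smul, ← add_smul]
        convert zero_smul ℝ _
        rw [hα]; field_simp; ring
      · rw [smul_dotProduct, dotProduct_smul, smul_eq_mul, smul_eq_mul, hn1]
        nlinarith [hα0, hα1]
      · have e1 : (α • u') ⬝ᵥ S.mulVec (α • u') = α ^ 2 * lmax := by
          rw [Matrix.mulVec_smul, smul_dotProduct, dotProduct_smul,
            smul_eq_mul, smul_eq_mul, hqu]
          ring
        rw [e1, hqu, hκ, hα]
        field_simp
        ring
    rcases min_choice (min lmin κ) 0 with h | h <;> rw [h]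
    · rcases min_choice lmin κ with h' | h' <;> rw [h']
      · exact hlm
      · exact hκm
    · exact h0
  · -- lower bound
    rintro t ⟨w₁, w₂, δ₁, δ₂, hw, habs, hcon, hd1, hd2, ht⟩
    have hm0 : min (min lmin κ) 0 ≤ 0 := min_le_right _ _
    have hmk : min (min lmin κ) 0 ≤ κ := le_trans (min_le_left _ _) (min_le_right _ _)
    have hml : min (min lmin κ) 0 ≤ lmin := le_trans (min_le_left _ _) (min_le_left _ _)
    have ha0 : 0 ≤ δ₁ ⬝ᵥ δ₁ := dp_nonneg δ₁
    have hb0 : 0 ≤ δ₂ ⬝ᵥ δ₂ := dp_nonneg δ₂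
    obtain ⟨hr1l, hr1u⟩ := hray δ₁
    obtain ⟨hr2l, hr2u⟩ := hray δ₂
    rcases lt_or_ge w₂ 0 with hw2 | hw2
    · -- w₂ < 0
      have hw1p : 0 < w₁ := by linarith
      have hneg : w₂ • δ₂ = -(w₁ • δ₁) := by
        rw [eq_neg_iff_add_eq_zero, add_comm]; exact hcon
      have hab : w₂ ^ 2 * (δ₂ ⬝ᵥ δ₂) = w₁ ^ 2 * (δ₁ ⬝ᵥ δ₁) := by
        have := congrArg₂ (· ⬝ᵥ ·) hneg hneg
        simpa [smul_dotProduct, dotProduct_smul, neg_dotProduct,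
          dotProduct_neg, smul_eq_mul, pow_two, mul_assoc] using this
      have hq : w₂ ^ 2 * (δ₂ ⬝ᵥ S.mulVec δ₂) = w₁ ^ 2 * (δ₁ ⬝ᵥ S.mulVec δ₁) := by
        have := congrArg₂ (fun x y => x ⬝ᵥ S.mulVec y) hneg hneg
        simpa [smul_dotProduct, dotProduct_smul, neg_dotProduct,
          dotProduct_neg, Matrix.mulVec_smul, Matrix.mulVec_neg,
          smul_eq_mul, pow_two, mul_assoc] using this
      have hwc : w₁ - w₂ ≤ c := by
        rwa [abs_of_pos hw1p, abs_of_neg hw2] at habs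
      rcases neg_case c lmax w₁ w₂ _ _ _ _ t hc hw hw2 hwc ha0 hd2 hab hq hr1u ht with h | h
      · exact le_trans hmk h
      · exact le_trans hm0 h
    rcases lt_or_ge w₁ 0 with hw1 | hw1
    · -- w₁ < 0
      have hw2p : 0 < w₂ := by linarith
      have hneg : w₁ • δ₁ = -(w₂ • δ₂) := by
        rw [eq_neg_iff_add_eq_zero]; exact hcon
      have hab : w₁ ^ 2 * (δ₁ ⬝ᵥ δ₁) = w₂ ^ 2 * (δ₂ ⬝ᵥ δ₂) := by
        have := congrArg₂ (· ⬝ᵥ ·) hneg hneg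
        simpa [smul_dotProduct, dotProduct_smul, neg_dotProduct,
          dotProduct_neg, smul_eq_mul, pow_two, mul_assoc] using this
      have hq : w₁ ^ 2 * (δ₁ ⬝ᵥ S.mulVec δ₁) = w₂ ^ 2 * (δ₂ ⬝ᵥ S.mulVec δ₂) := by
        have := congrArg₂ (fun x y => x ⬝ᵥ S.mulVec y) hneg hneg
        simpa [smul_dotProduct, dotProduct_smul, neg_dotProduct,
          dotProduct_neg, Matrix.mulVec_smul, Matrix.mulVec_neg,
          smul_eq_mul, pow_two, mul_assoc] using this
      have hwc : w₂ - w₁ ≤ c := by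
        rw [abs_of_neg hw1, abs_of_pos hw2p] at habs; linarith
      have ht' : t = w₂ * (δ₂ ⬝ᵥ S.mulVec δ₂) + w₁ * (δ₁ ⬝ᵥ S.mulVec δ₁) := by
        rw [ht]; ring
      rcases neg_case c lmax w₂ w₁ _ _ _ _ t hc (by linarith) hw1 hwc hb0 hd1 hab hq hr2u ht'
        with h | h
      · exact le_trans hmk h
      · exact le_trans hm0 h
    · -- both nonneg
      have key : min lmin 0 ≤ t := by
        have b1 : w₁ * (lmin * (δ₁ ⬝ᵥ δ₁)) ≤ w₁ * (δ₁ ⬝ᵥ S.mulVec δ₁) :=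
          mul_le_mul_of_nonneg_left hr1l hw1
        have b2 : w₂ * (lmin * (δ₂ ⬝ᵥ δ₂)) ≤ w₂ * (δ₂ ⬝ᵥ S.mulVec δ₂) :=
          mul_le_mul_of_nonneg_left hr2l hw2
        have hs0 : 0 ≤ w₁ * (δ₁ ⬝ᵥ δ₁) + w₂ * (δ₂ ⬝ᵥ δ₂) := by positivity
        have hs1 : w₁ * (δ₁ ⬝ᵥ δ₁) + w₂ * (δ₂ ⬝ᵥ δ₂) ≤ 1 := by nlinarith
        rcases le_or_gt lmin 0 with hl | hl
        · refine le_trans (min_le_left _ _) ?_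
          nlinarith [b1, b2, hs1, hl, ht]
        · refine le_trans (min_le_right _ _) ?_
          nlinarith [b1, b2, hs0, hl.le, ht]
      exact le_trans (le_min hml hm0) key
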